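/- For a linear map f*: V → W and a linear generalized complex structure J on W with tensors (A, π, σ), the pullback f⃖*L ∩ f⃖*L̄ equals the complexification of ker f* (i.e., f* is backward regular) if and only if im f* ∩ π♯(ker f*ᵗ) = 0 and A(im f*) ⊆ im f* + im π♯. -/

import Mathlib

open LinearMap Module TensorProduct

/-- The block endomorphism `J(X,α) = (AX + π♯α, σ♭X - A*α)` of `W ⊕ W*`. -/
noncomputable def blockJ {W : Type*} [AddCommGroup W] [Module ℝ W]
    (A : W →ₗ[ℝ] W) (piSh : Module.Dual ℝ W →ₗ[ℝ] W)
    (sigFl : W →ₗ[ℝ] Module.Dual ℝ W) :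
    (W × Module.Dual ℝ W) →ₗ[ℝ] (W × Module.Dual ℝ W) :=
  ((A ∘ₗ fst ℝ W (Module.Dual ℝ W)) + (piSh ∘ₗ snd ℝ W (Module.Dual ℝ W))).prod
    ((sigFl ∘ₗ fst ℝ W (Module.Dual ℝ W)) - (A.dualMap ∘ₗ snd ℝ W (Module.Dual ℝ W)))

/-- The complexified pullback operation `f⃖* : subspaces of (W ⊕ W*)ᶜ →
subspaces of (V ⊕ V*)ᶜ`. -/
noncomputable def PullbackC {V W : Type*} [AddCommGroup V] [Module ℝ V]
    [AddCommGroup W] [Module ℝ W] (f : V →ₗ[ℝ] W)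
    (U : Submodule ℂ (ℂ ⊗[ℝ] (W × Module.Dual ℝ W))) :
    Submodule ℂ (ℂ ⊗[ℝ] (V × Module.Dual ℝ V)) :=
  Submodule.map ((LinearMap.prodMap (LinearMap.id (M := V)) f.dualMap).baseChange ℂ)
    (Submodule.comap
      ((LinearMap.prodMap f (LinearMap.id (M := Module.Dual ℝ W))).baseChange ℂ) U)

section Aux
variable {M : Type*} [AddCommGroup M] [Module ℝ M]

noncomputable def reT (M : Type*) [AddCommGroup M] [Module ℝ M] : ℂ ⊗[ℝ] M →ₗ[ℝ] M :=
  (TensorProduct.lid ℝ M).toLinearMap ∘ₗ (LinearMap.rTensor M Complex.reLm)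

noncomputable def imT (M : Type*) [AddCommGroup M] [Module ℝ M] : ℂ ⊗[ℝ] M →ₗ[ℝ] M :=
  (TensorProduct.lid ℝ M).toLinearMap ∘ₗ (LinearMap.rTensor M Complex.imLm)

@[simp] lemma reT_tmul (c : ℂ) (m : M) : reT M (c ⊗ₜ m) = c.re • m := by simp [reT]

@[simp] lemma imT_tmul (c : ℂ) (m : M) : imT M (c ⊗ₜ m) = c.im • m := by simp [imT]

lemma decompC (z : ℂ ⊗[ℝ] M) : ∃ p q : M, z = 1 ⊗ₜ[ℝ] p + Complex.I ⊗ₜ[ℝ] q := by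
  induction z using TensorProduct.induction_on with
  | zero => exact ⟨0, 0, by simp⟩
  | tmul c m =>
      refine ⟨c.re • m, c.im • m, ?_⟩
      rw [tmul_smul, tmul_smul, smul_tmul', smul_tmul', ← add_tmul]
      congr 1
      simp [Complex.real_smul]
  | add x y hx hy =>
      obtain ⟨p, q, rfl⟩ := hx
      obtain ⟨p', q', rfl⟩ := hy
      exact ⟨p + p', q + q', by rw [tmul_add, tmul_add]; abel⟩

lemma uniqC {p q : M} (h : (1 : ℂ) ⊗ₜ[ℝ] p + Complex.I ⊗ₜ[ℝ] q = 0) : p = 0 ∧ q = 0 :=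
  ⟨by simpa using congrArg (reT M) h, by simpa using congrArg (imT M) h⟩

lemma uniqC' {p q p' q' : M}
    (h : (1 : ℂ) ⊗ₜ[ℝ] p + Complex.I ⊗ₜ[ℝ] q = 1 ⊗ₜ[ℝ] p' + Complex.I ⊗ₜ[ℝ] q') :
    p = p' ∧ q = q' := by
  have h0 : (1 : ℂ) ⊗ₜ[ℝ] (p - p') + Complex.I ⊗ₜ[ℝ] (q - q') = 0 := by
    rw [tmul_sub, tmul_sub, sub_add_sub_comm, h, sub_self]
  obtain ⟨h1, h2⟩ := uniqC h0
  exact ⟨sub_eq_zero.mp h1, sub_eq_zero.mp h2⟩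

lemma tmul_one_eq_zero {p : M} (h : (1 : ℂ) ⊗ₜ[ℝ] p = 0) : p = 0 := by
  simpa using congrArg (reT M) h

lemma mem_eigen_I (T : M →ₗ[ℝ] M) (p q : M) :
    (1 ⊗ₜ[ℝ] p + Complex.I ⊗ₜ[ℝ] q) ∈ Module.End.eigenspace
      (R := ℂ) (M := ℂ ⊗[ℝ] M) (T.baseChange ℂ) Complex.I ↔ (T p = -q ∧ T q = p) := by
  rw [Module.End.mem_eigenspace_iff]
  have hL : (T.baseChange ℂ) (1 ⊗ₜ[ℝ] p + Complex.I ⊗ₜ[ℝ] q)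
      = 1 ⊗ₜ[ℝ] (T p) + Complex.I ⊗ₜ[ℝ] (T q) := by
    simp [LinearMap.baseChange_tmul]
  have hR : Complex.I • ((1:ℂ) ⊗ₜ[ℝ] p + Complex.I ⊗ₜ[ℝ] q)
      = 1 ⊗ₜ[ℝ] (-q) + Complex.I ⊗ₜ[ℝ] p := by
    rw [smul_add, smul_tmul', smul_tmul']
    simp only [smul_eq_mul, mul_one, Complex.I_mul_I]
    rw [tmul_neg, ← neg_tmul]
    abel
  rw [hL, hR]
  constructor
  · intro h; exact uniqC' h
  · rintro ⟨h1, h2⟩; rw [h1, h2]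

lemma mem_eigen_negI (T : M →ₗ[ℝ] M) (p q : M) :
    (1 ⊗ₜ[ℝ] p + Complex.I ⊗ₜ[ℝ] q) ∈ Module.End.eigenspace
      (R := ℂ) (M := ℂ ⊗[ℝ] M) (T.baseChange ℂ) (-Complex.I) ↔ (T p = q ∧ T q = -p) := by
  rw [Module.End.mem_eigenspace_iff]
  have hL : (T.baseChange ℂ) (1 ⊗ₜ[ℝ] p + Complex.I ⊗ₜ[ℝ] q)
      = 1 ⊗ₜ[ℝ] (T p) + Complex.I ⊗ₜ[ℝ] (T q) := by
    simp [LinearMap.baseChange_tmul]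
  have hR : (-Complex.I) • ((1:ℂ) ⊗ₜ[ℝ] p + Complex.I ⊗ₜ[ℝ] q)
      = 1 ⊗ₜ[ℝ] q + Complex.I ⊗ₜ[ℝ] (-p) := by
    rw [smul_add, smul_tmul', smul_tmul']
    simp only [smul_eq_mul, mul_one, neg_mul, Complex.I_mul_I, neg_neg]
    rw [tmul_neg, ← neg_tmul]
    abel
  rw [hL, hR]
  constructor
  · intro h; exact uniqC' h
  · rintro ⟨h1, h2⟩; rw [h1, h2]

end Aux

section Main

variable {V W : Type*} [AddCommGroup V] [Module ℝ V] [AddCommGroup W] [Module ℝ W]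

lemma blockJ_apply (A : W →ₗ[ℝ] W) (piSh : Module.Dual ℝ W →ₗ[ℝ] W)
    (sigFl : W →ₗ[ℝ] Module.Dual ℝ W) (w : W) (α : Module.Dual ℝ W) :
    blockJ A piSh sigFl (w, α) = (A w + piSh α, sigFl w - A.dualMap α) := rfl

/-- membership in the complexified graph of `ker f` inside `ℂ ⊗ (V × V*)`. -/
lemma mem_inl_ker (f : V →ₗ[ℝ] W) (p q : V × Module.Dual ℝ V) :
    ((1 : ℂ) ⊗ₜ[ℝ] p + Complex.I ⊗ₜ[ℝ] q ∈
      Submodule.map ((LinearMap.inl ℝ V (Module.Dual ℝ V)).baseChange ℂ)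
        (LinearMap.ker (f.baseChange ℂ))) ↔
    (f p.1 = 0 ∧ f q.1 = 0 ∧ p.2 = 0 ∧ q.2 = 0) := by
  constructor
  · rintro ⟨u, hu, huz⟩
    obtain ⟨u₁, u₂, rfl⟩ := decompC u
    simp only [SetLike.mem_coe, LinearMap.mem_ker] at hu
    simp only [map_add, LinearMap.baseChange_tmul] at hu huz
    obtain ⟨hf1, hf2⟩ := uniqC hu
    obtain ⟨h1, h2⟩ := uniqC' huz
    have hp : ((u₁, 0) : V × Module.Dual ℝ V) = p := h1
    have hq : ((u₂, 0) : V × Module.Dual ℝ V) = q := h2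
    refine ⟨?_, ?_, ?_, ?_⟩
    · rw [← hp]; exact hf1
    · rw [← hq]; exact hf2
    · rw [← hp]
    · rw [← hq]
  · rintro ⟨h1, h2, h3, h4⟩
    refine ⟨1 ⊗ₜ[ℝ] p.1 + Complex.I ⊗ₜ[ℝ] q.1, ?_, ?_⟩
    · simp only [SetLike.mem_coe, LinearMap.mem_ker]
      simp [LinearMap.baseChange_tmul, h1, h2]
    · simp only [map_add, LinearMap.baseChange_tmul, LinearMap.inl_apply]
      congr 1 <;> congr 1
      · exact Prod.ext rfl h3.symm
      · exact Prod.ext rfl h4.symm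

end Main

set_option maxHeartbeats 2000000 in
/-- `f : V → (W, J)` is backward regular, i.e. `f⃖*L ∩ f⃖*L̄ = (ker f)ᶜ` (the
smallest possible intersection), iff `im f ∩ π♯(ker fᵗ) = 0` and
`A(im f) ⊆ im f + im π♯`.  Here `L` is the `+i`-eigenspace of the generalized
complex structure `J` with classical tensors `(A, π, σ)`, and `L̄` its conjugate,
the `-i`-eigenspace. -/
theorem backward_regular_iff
    (V W : Type*) [AddCommGroup V] [Module ℝ V] [FiniteDimensional ℝ V]
    [AddCommGroup W] [Module ℝ W] [FiniteDimensional ℝ W]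
    (f : V →ₗ[ℝ] W)
    (A : W →ₗ[ℝ] W) (piSh : Module.Dual ℝ W →ₗ[ℝ] W)
    (sigFl : W →ₗ[ℝ] Module.Dual ℝ W)
    (hpi : ∀ α β : Module.Dual ℝ W, α (piSh β) = - β (piSh α))
    (hsig : ∀ X Y : W, sigFl X Y = - sigFl Y X)
    (h1 : A ∘ₗ A + piSh ∘ₗ sigFl = -LinearMap.id)
    (h2 : piSh ∘ₗ A.dualMap = A ∘ₗ piSh)
    (h3 : sigFl ∘ₗ A = A.dualMap ∘ₗ sigFl) :
    (PullbackC f (Module.End.eigenspace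
        (R := ℂ) (M := ℂ ⊗[ℝ] (W × Module.Dual ℝ W))
        ((blockJ A piSh sigFl).baseChange ℂ) Complex.I) ⊓
      PullbackC f (Module.End.eigenspace
        (R := ℂ) (M := ℂ ⊗[ℝ] (W × Module.Dual ℝ W))
        ((blockJ A piSh sigFl).baseChange ℂ) (-Complex.I)) =
      Submodule.map ((LinearMap.inl ℝ V (Module.Dual ℝ V)).baseChange ℂ)
        (LinearMap.ker (f.baseChange ℂ))) ↔
    (LinearMap.range f ⊓ Submodule.map piSh (LinearMap.ker f.dualMap) = ⊥ ∧
      Submodule.map A (LinearMap.range f) ≤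
        LinearMap.range f ⊔ LinearMap.range piSh) := by
  have h1' : ∀ y : W, A (A y) + piSh (sigFl y) = -y := by
    intro y
    have := congrArg (fun g => g y) h1
    simpa using this
  have h2' : ∀ η : Module.Dual ℝ W, piSh (A.dualMap η) = A (piSh η) := by
    intro η
    have := congrArg (fun g => g η) h2
    simpa using this
  constructor
  · intro heq
    constructor
    · -- condition (a)
      rw [Submodule.eq_bot_iff]
      intro w hw
      rw [Submodule.mem_inf] at hw
      obtain ⟨⟨x, rfl⟩, η, hηker, hπη⟩ := hw
      have hfη : f.dualMap η = 0 := LinearMap.mem_ker.mp hηker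
      have hπA : piSh (A.dualMap η) = A (f x) := by rw [h2', hπη]
      have hσ : sigFl (f x) + A.dualMap (A.dualMap η) = -η := by
        ext y
        have e1 : sigFl (f x) y = η (piSh (sigFl y)) := by
          rw [← hπη, hsig (piSh η) y, hpi (sigFl y) η, neg_neg]
        simp only [LinearMap.add_apply, LinearMap.neg_apply, LinearMap.dualMap_apply]
        rw [e1, ← map_add, add_comm (piSh (sigFl y)) (A (A y)), h1' y, map_neg]
      have hz : ((1 : ℂ) ⊗ₜ[ℝ] ((x, -f.dualMap (A.dualMap η)) : V × Module.Dual ℝ V) +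
            Complex.I ⊗ₜ[ℝ] ((0 : V), (0 : Module.Dual ℝ V))) ∈
          PullbackC f (Module.End.eigenspace
            (R := ℂ) (M := ℂ ⊗[ℝ] (W × Module.Dual ℝ W))
            ((blockJ A piSh sigFl).baseChange ℂ) Complex.I) ⊓
          PullbackC f (Module.End.eigenspace
            (R := ℂ) (M := ℂ ⊗[ℝ] (W × Module.Dual ℝ W))
            ((blockJ A piSh sigFl).baseChange ℂ) (-Complex.I)) := by
        rw [Submodule.mem_inf]
        constructor
        · refine Submodule.mem_map.mpr
            ⟨1 ⊗ₜ[ℝ] ((x, -A.dualMap η) : V × Module.Dual ℝ W)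
              + Complex.I ⊗ₜ[ℝ] ((0 : V), η), Submodule.mem_comap.mpr ?_, ?_⟩
          · have hg : (LinearMap.prodMap f (LinearMap.id (M := Module.Dual ℝ W))).baseChange ℂ
                (1 ⊗ₜ[ℝ] ((x, -A.dualMap η) : V × Module.Dual ℝ W)
                  + Complex.I ⊗ₜ[ℝ] ((0 : V), η))
                = 1 ⊗ₜ[ℝ] ((f x, -A.dualMap η) : W × Module.Dual ℝ W)
                  + Complex.I ⊗ₜ[ℝ] ((0 : W), η) := by
              simp [LinearMap.baseChange_tmul]
            rw [hg, mem_eigen_I]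
            constructor
            · rw [blockJ_apply, Prod.neg_mk, Prod.mk.injEq]
              constructor
              · rw [map_neg, hπA]; simp
              · rw [map_neg, sub_neg_eq_add]; exact hσ
            · rw [blockJ_apply, Prod.mk.injEq]
              exact ⟨by rw [map_zero, zero_add, hπη],
                by rw [map_zero, zero_sub]⟩
          · simp [LinearMap.baseChange_tmul, hfη]
        · refine Submodule.mem_map.mpr
            ⟨1 ⊗ₜ[ℝ] ((x, -A.dualMap η) : V × Module.Dual ℝ W)
              + Complex.I ⊗ₜ[ℝ] ((0 : V), -η), Submodule.mem_comap.mpr ?_, ?_⟩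
          · have hg : (LinearMap.prodMap f (LinearMap.id (M := Module.Dual ℝ W))).baseChange ℂ
                (1 ⊗ₜ[ℝ] ((x, -A.dualMap η) : V × Module.Dual ℝ W)
                  + Complex.I ⊗ₜ[ℝ] ((0 : V), -η))
                = 1 ⊗ₜ[ℝ] ((f x, -A.dualMap η) : W × Module.Dual ℝ W)
                  + Complex.I ⊗ₜ[ℝ] ((0 : W), -η) := by
              simp [LinearMap.baseChange_tmul]
            rw [hg, mem_eigen_negI]
            constructor
            · rw [blockJ_apply, Prod.mk.injEq]
              constructor
              · rw [map_neg, hπA]; simp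
              · rw [map_neg, sub_neg_eq_add]; exact hσ
            · rw [blockJ_apply, Prod.neg_mk, Prod.mk.injEq]
              constructor
              · rw [map_neg, map_zero, zero_add, hπη]
              · rw [map_neg, map_zero, zero_sub, neg_neg]
          · simp [LinearMap.baseChange_tmul, hfη]
      rw [heq, mem_inl_ker] at hz
      exact hz.1
    · -- condition (b)
      rintro w' hw'
      rw [Submodule.mem_map] at hw'
      obtain ⟨w, hw, rfl⟩ := hw'
      obtain ⟨x, rfl⟩ := hw
      by_contra hmem
      set P := LinearMap.range f ⊔ LinearMap.range piSh with hP
      have hAfx : P.mkQ (A (f x)) ≠ 0 := by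
        simpa [Submodule.Quotient.mk_eq_zero] using hmem
      have hexists : ∃ φ : Module.Dual ℝ (W ⧸ P), φ (P.mkQ (A (f x))) ≠ 0 := by
        by_contra hc
        push_neg at hc
        exact hAfx ((Module.forall_dual_apply_eq_zero_iff ℝ _).mp hc)
      obtain ⟨φ, hφ⟩ := hexists
      set α : Module.Dual ℝ W := φ ∘ₗ P.mkQ with hα
      have hαP : ∀ y ∈ P, α y = 0 := by
        intro y hy
        simp [hα, (Submodule.Quotient.mk_eq_zero P).mpr hy]
      have hαf : ∀ v, α (f v) = 0 := fun v =>
        hαP _ (Submodule.mem_sup_left (LinearMap.mem_range_self f v))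
      have hαπ : ∀ β, α (piSh β) = 0 := fun β =>
        hαP _ (Submodule.mem_sup_right (LinearMap.mem_range_self piSh β))
      have hπα : piSh α = 0 := by
        rw [← Module.forall_dual_apply_eq_zero_iff ℝ]
        intro γ
        rw [hpi γ α, hαπ γ, neg_zero]
      have hAA : A.dualMap (A.dualMap α) = -α := by
        ext y
        simp only [LinearMap.dualMap_apply, LinearMap.neg_apply]
        have hAy : A (A y) = -y - piSh (sigFl y) := eq_sub_of_add_eq (h1' y)
        rw [hAy, map_sub, map_neg, hαπ, sub_zero]
      have hfα : f.dualMap α = 0 := by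
        ext v; exact hαf v
      have hπAα : piSh (A.dualMap α) = 0 := by rw [h2', hπα, map_zero]
      have hz : ((1 : ℂ) ⊗ₜ[ℝ] (((0 : V), f.dualMap (A.dualMap α)) : V × Module.Dual ℝ V) +
            Complex.I ⊗ₜ[ℝ] ((0 : V), (0 : Module.Dual ℝ V))) ∈
          PullbackC f (Module.End.eigenspace
            (R := ℂ) (M := ℂ ⊗[ℝ] (W × Module.Dual ℝ W))
            ((blockJ A piSh sigFl).baseChange ℂ) Complex.I) ⊓
          PullbackC f (Module.End.eigenspace
            (R := ℂ) (M := ℂ ⊗[ℝ] (W × Module.Dual ℝ W))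
            ((blockJ A piSh sigFl).baseChange ℂ) (-Complex.I)) := by
        rw [Submodule.mem_inf]
        constructor
        · refine Submodule.mem_map.mpr
            ⟨1 ⊗ₜ[ℝ] (((0 : V), A.dualMap α) : V × Module.Dual ℝ W)
              + Complex.I ⊗ₜ[ℝ] ((0 : V), -α), Submodule.mem_comap.mpr ?_, ?_⟩
          · have hg : (LinearMap.prodMap f (LinearMap.id (M := Module.Dual ℝ W))).baseChange ℂ
                (1 ⊗ₜ[ℝ] (((0 : V), A.dualMap α) : V × Module.Dual ℝ W)
                  + Complex.I ⊗ₜ[ℝ] ((0 : V), -α))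
                = 1 ⊗ₜ[ℝ] (((0 : W), A.dualMap α) : W × Module.Dual ℝ W)
                  + Complex.I ⊗ₜ[ℝ] ((0 : W), -α) := by
              simp [LinearMap.baseChange_tmul]
            rw [hg, mem_eigen_I]
            constructor
            · rw [blockJ_apply, Prod.neg_mk, Prod.mk.injEq]
              constructor
              · rw [map_zero, zero_add, hπAα]; rw [neg_zero]
              · rw [map_zero, zero_sub, hAA, neg_neg]
            · rw [blockJ_apply, Prod.mk.injEq]
              constructor
              · rw [map_neg, map_zero, zero_add, hπα, neg_zero]
              · rw [map_neg, map_zero, zero_sub, neg_neg]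
          · simp [LinearMap.baseChange_tmul, hfα]
        · refine Submodule.mem_map.mpr
            ⟨1 ⊗ₜ[ℝ] (((0 : V), A.dualMap α) : V × Module.Dual ℝ W)
              + Complex.I ⊗ₜ[ℝ] ((0 : V), α), Submodule.mem_comap.mpr ?_, ?_⟩
          · have hg : (LinearMap.prodMap f (LinearMap.id (M := Module.Dual ℝ W))).baseChange ℂ
                (1 ⊗ₜ[ℝ] (((0 : V), A.dualMap α) : V × Module.Dual ℝ W)
                  + Complex.I ⊗ₜ[ℝ] ((0 : V), α))
                = 1 ⊗ₜ[ℝ] (((0 : W), A.dualMap α) : W × Module.Dual ℝ W)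
                  + Complex.I ⊗ₜ[ℝ] ((0 : W), α) := by
              simp [LinearMap.baseChange_tmul]
            rw [hg, mem_eigen_negI]
            constructor
            · rw [blockJ_apply, Prod.mk.injEq]
              constructor
              · rw [map_zero, zero_add, hπAα]
              · rw [map_zero, zero_sub, hAA, neg_neg]
            · rw [blockJ_apply, Prod.neg_mk, Prod.mk.injEq]
              constructor
              · rw [map_zero, zero_add, hπα, neg_zero]
              · rw [map_zero, zero_sub]
          · simp [LinearMap.baseChange_tmul, hfα]
      rw [heq, mem_inl_ker] at hz
      have hz2 : f.dualMap (A.dualMap α) = 0 := hz.2.2.1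
      have : α (A (f x)) = 0 := by
        have := congrArg (fun g => g x) hz2
        simpa using this
      exact hφ this
  · rintro ⟨ha, hb⟩
    apply le_antisymm
    · rintro z hz
      rw [Submodule.mem_inf] at hz
      obtain ⟨hz1, hz2⟩ := hz
      obtain ⟨m₁, hm₁U, hm₁z⟩ := Submodule.mem_map.mp hz1
      obtain ⟨m₂, hm₂U, hm₂z⟩ := Submodule.mem_map.mp hz2
      rw [Submodule.mem_comap] at hm₁U hm₂U
      obtain ⟨⟨x₁, a₁⟩, ⟨x₂, a₂⟩, rfl⟩ := decompC m₁
      obtain ⟨⟨y₁, b₁⟩, ⟨y₂, b₂⟩, rfl⟩ := decompC m₂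
      have hg1 : (LinearMap.prodMap f (LinearMap.id (M := Module.Dual ℝ W))).baseChange ℂ
            (1 ⊗ₜ[ℝ] (x₁, a₁) + Complex.I ⊗ₜ[ℝ] (x₂, a₂))
          = 1 ⊗ₜ[ℝ] ((f x₁, a₁) : W × Module.Dual ℝ W) + Complex.I ⊗ₜ[ℝ] (f x₂, a₂) := by
        simp [LinearMap.baseChange_tmul]
      have hg2 : (LinearMap.prodMap f (LinearMap.id (M := Module.Dual ℝ W))).baseChange ℂ
            (1 ⊗ₜ[ℝ] (y₁, b₁) + Complex.I ⊗ₜ[ℝ] (y₂, b₂))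
          = 1 ⊗ₜ[ℝ] ((f y₁, b₁) : W × Module.Dual ℝ W) + Complex.I ⊗ₜ[ℝ] (f y₂, b₂) := by
        simp [LinearMap.baseChange_tmul]
      rw [hg1, mem_eigen_I] at hm₁U
      rw [hg2, mem_eigen_negI] at hm₂U
      obtain ⟨hE1, hE2⟩ := hm₁U
      obtain ⟨hF1, hF2⟩ := hm₂U
      rw [blockJ_apply, Prod.neg_mk, Prod.mk.injEq] at hE1 hF2
      rw [blockJ_apply, Prod.mk.injEq] at hE2 hF1
      obtain ⟨hE11, hE12⟩ := hE1
      obtain ⟨hE21, hE22⟩ := hE2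
      obtain ⟨hF11, hF12⟩ := hF1
      obtain ⟨hF21, hF22⟩ := hF2
      -- equality of the two pullback representatives
      have hzz : (1 : ℂ) ⊗ₜ[ℝ] ((x₁, f.dualMap a₁) : V × Module.Dual ℝ V)
            + Complex.I ⊗ₜ[ℝ] (x₂, f.dualMap a₂)
          = 1 ⊗ₜ[ℝ] ((y₁, f.dualMap b₁) : V × Module.Dual ℝ V)
            + Complex.I ⊗ₜ[ℝ] (y₂, f.dualMap b₂) := by
        have e1 : (LinearMap.prodMap (LinearMap.id (M := V)) f.dualMap).baseChange ℂ
              (1 ⊗ₜ[ℝ] (x₁, a₁) + Complex.I ⊗ₜ[ℝ] (x₂, a₂))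
            = 1 ⊗ₜ[ℝ] ((x₁, f.dualMap a₁) : V × Module.Dual ℝ V)
              + Complex.I ⊗ₜ[ℝ] (x₂, f.dualMap a₂) := by
          simp [LinearMap.baseChange_tmul]
        have e2 : (LinearMap.prodMap (LinearMap.id (M := V)) f.dualMap).baseChange ℂ
              (1 ⊗ₜ[ℝ] (y₁, b₁) + Complex.I ⊗ₜ[ℝ] (y₂, b₂))
            = 1 ⊗ₜ[ℝ] ((y₁, f.dualMap b₁) : V × Module.Dual ℝ V)
              + Complex.I ⊗ₜ[ℝ] (y₂, f.dualMap b₂) := by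
          simp [LinearMap.baseChange_tmul]
        rw [← e1, ← e2, hm₁z, hm₂z]
      obtain ⟨hpq1, hpq2⟩ := uniqC' hzz
      rw [Prod.mk.injEq] at hpq1 hpq2
      obtain ⟨hxy1, hab1⟩ := hpq1
      obtain ⟨hxy2, hab2⟩ := hpq2
      -- real linear algebra
      have hw2 : f x₂ = 0 := by
        have hmem : (-(2:ℝ)) • f x₂ ∈ LinearMap.range f ⊓
            Submodule.map piSh (LinearMap.ker f.dualMap) := by
          constructor
          · exact Submodule.smul_mem _ _ (LinearMap.mem_range_self f x₂)
          · refine ⟨a₁ - b₁, ?_, ?_⟩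
            · simp only [SetLike.mem_coe, LinearMap.mem_ker, map_sub, hab1, sub_self]
            · have hE11' : piSh a₁ = -f x₂ - A (f x₁) := by
                have h := hE11; rw [add_comm] at h; exact eq_sub_of_add_eq h
              have hF11' : piSh b₁ = f x₂ - A (f x₁) := by
                have h := hF11; rw [← hxy1, ← hxy2] at h
                rw [add_comm] at h; exact eq_sub_of_add_eq h
              rw [map_sub, hE11', hF11']
              module
        rw [ha] at hmem
        have h0 := (Submodule.mem_bot ℝ).mp hmem
        have h2ne : (-(2:ℝ)) ≠ 0 := by norm_num
        exact (smul_eq_zero.mp h0).resolve_left h2ne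
      have hw1 : f x₁ = 0 := by
        have hmem : ((2:ℝ)) • f x₁ ∈ LinearMap.range f ⊓
            Submodule.map piSh (LinearMap.ker f.dualMap) := by
          constructor
          · exact Submodule.smul_mem _ _ (LinearMap.mem_range_self f x₁)
          · refine ⟨a₂ - b₂, ?_, ?_⟩
            · simp only [SetLike.mem_coe, LinearMap.mem_ker, map_sub, hab2, sub_self]
            · have hE21' : piSh a₂ = f x₁ - A (f x₂) := by
                have h := hE21; rw [add_comm] at h; exact eq_sub_of_add_eq h
              have hF21' : piSh b₂ = -f x₁ - A (f x₂) := by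
                have h := hF21; rw [← hxy1, ← hxy2] at h
                rw [add_comm] at h; exact eq_sub_of_add_eq h
              rw [map_sub, hE21', hF21']
              module
        rw [ha] at hmem
        have h0 := (Submodule.mem_bot ℝ).mp hmem
        have h2ne : ((2:ℝ)) ≠ 0 := by norm_num
        exact (smul_eq_zero.mp h0).resolve_left h2ne
      have hfy1 : f y₁ = 0 := by rw [← hxy1]; exact hw1
      have hfy2 : f y₂ = 0 := by rw [← hxy2]; exact hw2
      have hπa₁ : piSh a₁ = 0 := by
        have h := hE11; rw [hw1, hw2, map_zero, zero_add] at h; rw [h, neg_zero]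
      have hπa₂ : piSh a₂ = 0 := by
        have h := hE21; rw [hw1, hw2, map_zero, zero_add] at h; exact h
      have hπb₁ : piSh b₁ = 0 := by
        have h := hF11; rw [hfy1, hfy2, map_zero, zero_add] at h; exact h
      have hAa₁ : A.dualMap a₁ = a₂ := by
        have h := hE12; rw [hw1, map_zero, zero_sub, neg_inj] at h; exact h
      have hAa₂ : A.dualMap a₂ = -a₁ := by
        have h := hE22; rw [hw2, map_zero, zero_sub] at h
        rw [← neg_eq_iff_eq_neg, h]
      have hAb₁ : A.dualMap b₁ = -b₂ := by
        have h := hF12; rw [hfy1, map_zero, zero_sub] at h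
        rw [← neg_eq_iff_eq_neg, h]
      have claim1 : ∀ v, a₂ (f v) = 0 := by
        intro v
        have hA : A (f v) ∈ LinearMap.range f ⊔ LinearMap.range piSh :=
          hb ⟨f v, LinearMap.mem_range_self f v, rfl⟩
        obtain ⟨y, hy, zz, hzz2, hsum⟩ := Submodule.mem_sup.mp hA
        obtain ⟨v', rfl⟩ := hy
        obtain ⟨β, rfl⟩ := hzz2
        have e1 : a₂ (f v) = a₁ (f v') := by
          rw [← hAa₁]
          simp only [LinearMap.dualMap_apply]
          rw [← hsum, map_add]
          have h0 : a₁ (piSh β) = 0 := by rw [hpi a₁ β, hπa₁]; simp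
          rw [h0, add_zero]
        have e2 : b₁ (f v') = -b₂ (f v) := by
          have h0 : (A.dualMap b₁) (f v) = -b₂ (f v) := by rw [hAb₁]; simp
          rw [← h0]
          simp only [LinearMap.dualMap_apply]
          rw [← hsum, map_add]
          have h1 : b₁ (piSh β) = 0 := by rw [hpi b₁ β, hπb₁]; simp
          rw [h1, add_zero]
        have e3 : a₁ (f v') = b₁ (f v') := by
          have := congrArg (fun g => g v') hab1
          simpa using this
        have e4 : a₂ (f v) = b₂ (f v) := by
          have := congrArg (fun g => g v) hab2
          simpa using this
        linarith [e1, e2, e3, e4]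
      have claim2 : ∀ v, a₁ (f v) = 0 := by
        intro v
        have hA : A (f v) ∈ LinearMap.range f ⊔ LinearMap.range piSh :=
          hb ⟨f v, LinearMap.mem_range_self f v, rfl⟩
        obtain ⟨y, hy, zz, hzz2, hsum⟩ := Submodule.mem_sup.mp hA
        obtain ⟨v', rfl⟩ := hy
        obtain ⟨β, rfl⟩ := hzz2
        have h : -a₁ (f v) = a₂ (f v') := by
          have h := congrArg (fun g => g (f v)) hAa₂
          simp only [LinearMap.dualMap_apply, LinearMap.neg_apply] at h
          rw [← h, ← hsum, map_add]
          have h0 : a₂ (piSh β) = 0 := by rw [hpi a₂ β, hπa₂]; simp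
          rw [h0, add_zero]
        rw [claim1 v'] at h
        linarith
      have hfa₁ : f.dualMap a₁ = 0 := by ext v; exact claim2 v
      have hfa₂ : f.dualMap a₂ = 0 := by ext v; exact claim1 v
      rw [← hm₁z]
      have e1 : (LinearMap.prodMap (LinearMap.id (M := V)) f.dualMap).baseChange ℂ
            (1 ⊗ₜ[ℝ] (x₁, a₁) + Complex.I ⊗ₜ[ℝ] (x₂, a₂))
          = 1 ⊗ₜ[ℝ] ((x₁, f.dualMap a₁) : V × Module.Dual ℝ V)
            + Complex.I ⊗ₜ[ℝ] (x₂, f.dualMap a₂) := by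
        simp [LinearMap.baseChange_tmul]
      rw [e1, mem_inl_ker]
      exact ⟨hw1, hw2, hfa₁, hfa₂⟩
    · rintro z hz
      obtain ⟨u, hu, rfl⟩ := Submodule.mem_map.mp hz
      obtain ⟨u₁, u₂, rfl⟩ := decompC u
      simp only [SetLike.mem_coe, LinearMap.mem_ker] at hu
      simp only [map_add, LinearMap.baseChange_tmul] at hu
      obtain ⟨hu1, hu2⟩ := uniqC hu
      have hinl : (LinearMap.inl ℝ V (Module.Dual ℝ V)).baseChange ℂ
            (1 ⊗ₜ[ℝ] u₁ + Complex.I ⊗ₜ[ℝ] u₂)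
          = 1 ⊗ₜ[ℝ] ((u₁, 0) : V × Module.Dual ℝ V) + Complex.I ⊗ₜ[ℝ] (u₂, 0) := by
        simp [LinearMap.baseChange_tmul]
      rw [hinl]
      have key : ∀ U : Submodule ℂ (ℂ ⊗[ℝ] (W × Module.Dual ℝ W)),
          (1 : ℂ) ⊗ₜ[ℝ] ((u₁, 0) : V × Module.Dual ℝ V) + Complex.I ⊗ₜ[ℝ] (u₂, 0)
            ∈ PullbackC f U := by
        intro U
        refine Submodule.mem_map.mpr
          ⟨1 ⊗ₜ[ℝ] ((u₁, 0) : V × Module.Dual ℝ W) + Complex.I ⊗ₜ[ℝ] (u₂, 0),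
            Submodule.mem_comap.mpr ?_, ?_⟩
        · have h0 : (LinearMap.prodMap f (LinearMap.id (M := Module.Dual ℝ W))).baseChange ℂ
              (1 ⊗ₜ[ℝ] ((u₁, 0) : V × Module.Dual ℝ W) + Complex.I ⊗ₜ[ℝ] (u₂, 0)) = 0 := by
            simp [LinearMap.baseChange_tmul, hu1, hu2, Prod.mk_zero_zero]
          rw [h0]
          exact Submodule.zero_mem U
        · simp [LinearMap.baseChange_tmul]
      exact Submodule.mem_inf.mpr ⟨key _, key _⟩
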